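/- Let G be a graph on m vertices. If the reduced cohomology group H̃^{m/2 - 1}(I(G); ℚ) is nonzero (with m even), then it is one-dimensional; moreover, it is nonzero exactly when G is a disjoint union of m/2 edges, in which case I(G) is the boundary of an m-dimensional cross-polytope (an (m/2 − 1)-dimensional sphere). -/

import Mathlib

open Finset

/-- An abstract simplicial complex on vertex type `V`, given by its set of faces
(downward closed). -/
structure SCpx (V : Type*) where
  faces : Set (Finset V)
  down : ∀ s t : Finset V, s ⊆ t → t ∈ faces → s ∈ faces

variable {V : Type*} [Fintype V] [DecidableEq V]

/-- The independence complex of a graph: faces are the independent sets. -/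
def indepCpx (G : SimpleGraph V) : SCpx V where
  faces := {s | ∀ u ∈ s, ∀ v ∈ s, ¬ G.Adj u v}
  down := fun s t hst ht u hu v hv => ht u (hst hu) v (hst hv)

/-- An enumeration of the vertices, used to fix orientation signs. -/
noncomputable def ordV (v : V) : ℕ := ((Fintype.equivFin V) v : ℕ)

/-- Reduced simplicial cochains: `cochain K d` is spanned by the faces of
cardinality `d` (so `d = 0` corresponds to the empty face, sitting in
reduced degree `-1`). -/
abbrev cochain (K : SCpx V) (d : ℕ) : Type _ :=
  {s : Finset V // s ∈ K.faces ∧ s.card = d} → ℚ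

/-- The simplicial coboundary map on reduced cochains. -/
noncomputable def delta (K : SCpx V) (d : ℕ) : cochain K d →ₗ[ℚ] cochain K (d + 1) where
  toFun f t := ∑ v ∈ t.1.attach,
    (-1 : ℚ) ^ ((t.1.filter fun w => ordV w < ordV v.1).card) *
      f ⟨t.1.erase v.1, K.down _ _ (Finset.erase_subset _ _) t.2.1, by
        simp [Finset.card_erase_of_mem v.2, t.2.2]⟩
  map_add' f g := by
    funext t
    simp only [Pi.add_apply, mul_add, Finset.sum_add_distrib]
  map_smul' c f := by
    funext t
    simp only [Pi.smul_apply, smul_eq_mul, RingHom.id_apply, Finset.mul_sum]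
    exact Finset.sum_congr rfl fun v _ => by ring

/-- The range of the previous coboundary (interpreted as `⊥` in lowest degree). -/
noncomputable def prevRange (K : SCpx V) : (d : ℕ) → Submodule ℚ (cochain K d)
  | 0 => ⊥
  | (d + 1) => LinearMap.range (delta K d)

/-- Reduced simplicial cohomology over `ℚ` in shifted indexing:
`Hq K d` is `H̃^{d-1}(K; ℚ)`. -/
abbrev Hq (K : SCpx V) (d : ℕ) :=
  ↥(LinearMap.ker (delta K d)) ⧸
    (prevRange K d).comap (LinearMap.ker (delta K d)).subtype

/-- `reducedBetti K r = dim_ℚ H̃^r(K; ℚ)`. -/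
noncomputable def reducedBetti (K : SCpx V) (r : ℤ) : ℕ :=
  if r < -1 then 0 else Module.finrank ℚ (Hq K (r + 1).toNat)


section Aux

variable {V : Type*} [Fintype V] [DecidableEq V]

lemma ordV_injective : Function.Injective (ordV (V := V)) := fun a b h =>
  (Fintype.equivFin V).injective (Fin.val_injective h)

/-- Number of elements of `s` below `v` in the fixed ordering. -/
noncomputable abbrev cnt (s : Finset V) (v : V) : ℕ := (s.filter fun w => ordV w < ordV v).card

lemma cnt_erase_lt {t : Finset V} {v w : V} (hv : v ∈ t) (h : ordV v < ordV w) :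
    cnt (t.erase v) w + 1 = cnt t w := by
  unfold cnt
  rw [Finset.filter_erase, Finset.card_erase_add_one (Finset.mem_filter.2 ⟨hv, h⟩)]

lemma cnt_erase_ge {t : Finset V} {v w : V} (h : ¬ ordV v < ordV w) :
    cnt (t.erase v) w = cnt t w := by
  unfold cnt
  have hnm : v ∉ t.filter fun x => ordV x < ordV w := fun hc => h (Finset.mem_filter.1 hc).2
  rw [Finset.filter_erase, Finset.erase_eq_of_notMem hnm]

lemma cnt_erase_self {t : Finset V} {v : V} : cnt (t.erase v) v = cnt t v :=
  cnt_erase_ge (lt_irrefl _)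

lemma cnt_insert_self {s : Finset V} {v : V} : cnt (insert v s) v = cnt s v := by
  unfold cnt
  rw [Finset.filter_insert, if_neg (lt_irrefl _)]

lemma sqq (n : ℕ) : (-1 : ℚ) ^ n * (-1 : ℚ) ^ n = 1 := by
  rw [← pow_add]
  exact Even.neg_one_pow ⟨n, rfl⟩

lemma sign_swap {t : Finset V} {v w : V} (hv : v ∈ t) (hw : w ∈ t) (hne : v ≠ w) :
    (-1 : ℚ) ^ cnt t v * (-1 : ℚ) ^ cnt (t.erase v) w
      = -((-1 : ℚ) ^ cnt t w * (-1 : ℚ) ^ cnt (t.erase w) v) := by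
  have main : ∀ a b : V, a ∈ t → b ∈ t → ordV a < ordV b →
      (-1 : ℚ) ^ cnt t a * (-1 : ℚ) ^ cnt (t.erase a) b
        = -((-1 : ℚ) ^ cnt t b * (-1 : ℚ) ^ cnt (t.erase b) a) := by
    intro a b ha hb hab
    have h1 : cnt (t.erase a) b + 1 = cnt t b := cnt_erase_lt ha hab
    have h2 : cnt (t.erase b) a = cnt t a := cnt_erase_ge (fun hc => lt_asymm hab hc)
    rw [h2, ← h1, pow_succ]
    ring
  rcases lt_or_gt_of_ne (fun h : ordV v = ordV w => hne (ordV_injective h)) with h | h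
  · exact main v w hv hw h
  · have := main w v hw hv h
    rw [this]; ring

lemma sign_helper1 {A B C D X : ℚ} (hss : A * B = -(C * D)) (hA : A * A = 1) (hD : D * D = 1) :
    B * (D * X) = -(A * (C * X)) := by
  linear_combination (A * D * X) * hss - (B * D * X) * hA - (A * C * X) * hD

lemma sign_helper2 {A B C D X : ℚ} (hss : A * B = -(C * D)) (hD : D * D = 1) :
    C * X = -(A * (B * (D * X))) := by
  linear_combination (D * X) * hss - (C * X) * hD

open Classical in
/-- Total-function extension of a cochain by `0`. -/
noncomputable def cext (K : SCpx V) (d : ℕ) (f : cochain K d) (s : Finset V) : ℚ :=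
  if h : s ∈ K.faces ∧ s.card = d then f ⟨s, h⟩ else 0

lemma cext_eq {K : SCpx V} {d : ℕ} (f : cochain K d) {s : Finset V}
    (h1 : s ∈ K.faces) (h2 : s.card = d) : cext K d f s = f ⟨s, h1, h2⟩ := by
  unfold cext
  exact dif_pos ⟨h1, h2⟩

lemma cext_val {K : SCpx V} {d : ℕ} (f : cochain K d)
    (t : {s : Finset V // s ∈ K.faces ∧ s.card = d}) : cext K d f t.1 = f t := by
  obtain ⟨s, h1, h2⟩ := t
  exact cext_eq f h1 h2

lemma cext_not {K : SCpx V} {d : ℕ} (f : cochain K d) {s : Finset V}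
    (h : ¬(s ∈ K.faces ∧ s.card = d)) : cext K d f s = 0 := by
  unfold cext
  exact dif_neg h

lemma cext_card_ne {K : SCpx V} {d : ℕ} (f : cochain K d) {s : Finset V}
    (h : s.card ≠ d) : cext K d f s = 0 := cext_not f (fun hc => h hc.2)

lemma cext_sub {K : SCpx V} {d : ℕ} (f g : cochain K d) (s : Finset V) :
    cext K d (f - g) s = cext K d f s - cext K d g s := by
  unfold cext
  split <;> simp

lemma cext_zero {K : SCpx V} {d : ℕ} (s : Finset V) :
    cext K d (0 : cochain K d) s = 0 := by
  unfold cext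
  split <;> simp

lemma delta_apply (K : SCpx V) (d : ℕ) (f : cochain K d)
    (t : {s : Finset V // s ∈ K.faces ∧ s.card = d + 1}) :
    delta K d f t = ∑ w ∈ t.1, (-1 : ℚ) ^ cnt t.1 w * cext K d f (t.1.erase w) := by
  rw [← Finset.sum_attach t.1 fun w => (-1 : ℚ) ^ cnt t.1 w * cext K d f (t.1.erase w)]
  show (∑ v ∈ t.1.attach,
      (-1 : ℚ) ^ ((t.1.filter fun w => ordV w < ordV v.1).card) *
        f ⟨t.1.erase v.1, K.down _ _ (Finset.erase_subset _ _) t.2.1, by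
          rw [Finset.card_erase_of_mem v.2, t.2.2, Nat.add_sub_cancel]⟩) = _
  refine Finset.sum_congr rfl fun v _ => ?_
  rw [cext_eq f (K.down _ _ (Finset.erase_subset _ _) t.2.1)
      (by rw [Finset.card_erase_of_mem v.2, t.2.2, Nat.add_sub_cancel])]

lemma cext_delta (K : SCpx V) (d : ℕ) (f : cochain K d) {t : Finset V}
    (ht : t ∈ K.faces) (htc : t.card = d + 1) :
    cext K (d + 1) (delta K d f) t = ∑ w ∈ t, (-1 : ℚ) ^ cnt t w * cext K d f (t.erase w) := by
  rw [cext_eq (delta K d f) ht htc]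
  exact delta_apply K d f ⟨t, ht, htc⟩

lemma delta_delta (K : SCpx V) (d : ℕ) (f : cochain K d) :
    delta K (d + 1) (delta K d f) = 0 := by
  funext t
  obtain ⟨t, ht, htc⟩ := t
  show delta K (d + 1) (delta K d f) ⟨t, ht, htc⟩ = 0
  rw [delta_apply]
  have hdiag : ∀ v ∈ t, (-1 : ℚ) ^ cnt t v *
      ((-1 : ℚ) ^ cnt (t.erase v) v * cext K d f ((t.erase v).erase v)) = 0 := by
    intro v hv
    rw [Finset.erase_idem,
      cext_card_ne f (by rw [Finset.card_erase_of_mem hv, htc]; omega)]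
    ring
  have hstep : ∀ w ∈ t, (-1 : ℚ) ^ cnt t w * cext K (d + 1) (delta K d f) (t.erase w)
      = ∑ x ∈ t, (-1 : ℚ) ^ cnt t w * ((-1 : ℚ) ^ cnt (t.erase w) x *
          cext K d f ((t.erase w).erase x)) := by
    intro w hw
    rw [cext_delta K d f (K.down _ _ (Finset.erase_subset _ _) ht)
        (by rw [Finset.card_erase_of_mem hw, htc, Nat.add_sub_cancel]), Finset.mul_sum]
    rw [Finset.sum_erase (s := t) (a := w) (hdiag w hw)]
  rw [Finset.sum_congr rfl hstep, ← Finset.sum_product']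
  refine Finset.sum_involution (fun p _ => (p.2, p.1)) ?_ ?_ ?_ ?_
  · rintro ⟨v, w⟩ hp
    obtain ⟨hv, hw⟩ := Finset.mem_product.1 hp
    simp only
    by_cases hvw : v = w
    · subst hvw
      rw [hdiag v hv]
      norm_num
    · have harg : (t.erase v).erase w = (t.erase w).erase v := Finset.erase_right_comm
      have ss := sign_swap hv hw hvw
      rw [harg]
      linear_combination (cext K d f ((t.erase w).erase v)) * ss
  · rintro ⟨v, w⟩ hp hne0
    obtain ⟨hv, hw⟩ := Finset.mem_product.1 hp
    intro hEq
    simp only [Prod.mk.injEq] at hEq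
    obtain ⟨rfl, -⟩ := hEq
    exact hne0 (hdiag _ hv)
  · rintro ⟨v, w⟩ hp
    obtain ⟨hv, hw⟩ := Finset.mem_product.1 hp
    exact Finset.mem_product.2 ⟨hw, hv⟩
  · rintro ⟨v, w⟩ hp
    rfl

/-! ### Deletion, link, cone -/

/-- Deletion of a vertex from a complex. -/
def delC (K : SCpx V) (v : V) : SCpx V where
  faces := {s | s ∈ K.faces ∧ v ∉ s}
  down := fun s t hst ht => ⟨K.down s t hst ht.1, fun hv => ht.2 (hst hv)⟩

/-- Link of a vertex in a complex. -/
def lkC (K : SCpx V) (v : V) : SCpx V where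
  faces := {s | v ∉ s ∧ insert v s ∈ K.faces}
  down := fun s t hst ht => ⟨fun hv => ht.1 (hst hv),
    K.down _ _ (Finset.insert_subset_insert v hst) ht.2⟩

/-- Restriction of a cochain to the deletion. -/
noncomputable def resD (K : SCpx V) (v : V) {m : ℕ} (f : cochain K m) :
    cochain (delC K v) m := fun s => cext K m f s.1

/-- Extension by zero from the deletion. -/
noncomputable def extD (K : SCpx V) (v : V) {m : ℕ} (g : cochain (delC K v) m) :
    cochain K m := fun s => cext (delC K v) m g s.1

/-- One direction of the degree-shift isomorphism with link cochains. -/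
noncomputable def phiL (K : SCpx V) (v : V) {n : ℕ} (f : cochain K (n + 1)) :
    cochain (lkC K v) n := fun s => (-1 : ℚ) ^ cnt s.1 v * cext K (n + 1) f (insert v s.1)

/-- The other direction of the degree-shift isomorphism with link cochains. -/
noncomputable def psiL (K : SCpx V) (v : V) {n : ℕ} (h : cochain (lkC K v) n) :
    cochain K (n + 1) := fun t =>
  if v ∈ t.1 then (-1 : ℚ) ^ cnt t.1 v * cext (lkC K v) n h (t.1.erase v) else 0

/-- The cone contraction operator. -/
noncomputable def coneH (K : SCpx V) (v : V) {n : ℕ} (f : cochain K (n + 1)) :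
    cochain K n := fun s =>
  if v ∈ s.1 then 0 else (-1 : ℚ) ^ cnt s.1 v * cext K (n + 1) f (insert v s.1)

lemma cext_resD (K : SCpx V) (v : V) {m : ℕ} (f : cochain K m) {s : Finset V} (hv : v ∉ s) :
    cext (delC K v) m (resD K v f) s = cext K m f s := by
  by_cases h : s ∈ K.faces ∧ s.card = m
  · rw [cext_eq (resD K v f) (show s ∈ (delC K v).faces from ⟨h.1, hv⟩) h.2]
    rw [cext_eq f h.1 h.2]
    show cext K m f s = _
    rw [cext_eq f h.1 h.2]
  · rw [cext_not f h, cext_not (resD K v f) (fun hc => h ⟨hc.1.1, hc.2⟩)]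

lemma cext_extD (K : SCpx V) (v : V) {m : ℕ} (g : cochain (delC K v) m) (s : Finset V) :
    cext K m (extD K v g) s = cext (delC K v) m g s := by
  by_cases h : s ∈ K.faces ∧ s.card = m
  · rw [cext_eq (extD K v g) h.1 h.2]
    rfl
  · rw [cext_not (extD K v g) h, cext_not g (fun hc => h ⟨hc.1.1, hc.2⟩)]

lemma cext_phiL (K : SCpx V) (v : V) {n : ℕ} (f : cochain K (n + 1)) {s : Finset V}
    (h1 : s ∈ (lkC K v).faces) (h2 : s.card = n) :
    cext (lkC K v) n (phiL K v f) s = (-1 : ℚ) ^ cnt s v * cext K (n + 1) f (insert v s) := by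
  rw [cext_eq (phiL K v f) h1 h2]
  rfl

lemma cext_psiL (K : SCpx V) (v : V) {n : ℕ} (h : cochain (lkC K v) n) (t : Finset V) :
    cext K (n + 1) (psiL K v h) t =
      if v ∈ t then (-1 : ℚ) ^ cnt t v * cext (lkC K v) n h (t.erase v) else 0 := by
  by_cases ht : t ∈ K.faces ∧ t.card = n + 1
  · rw [cext_eq (psiL K v h) ht.1 ht.2]
    rfl
  · rw [cext_not (psiL K v h) ht]
    by_cases hv : v ∈ t
    · rw [if_pos hv, cext_not h (fun hc => ht ⟨by
        rw [← Finset.insert_erase hv]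
        exact hc.1.2, by
        have h2 := hc.2
        have h3 : t.card = (t.erase v).card + 1 := by
          rw [Finset.card_erase_of_mem hv]
          have : 1 ≤ t.card := Finset.card_pos.2 ⟨v, hv⟩
          omega
        omega⟩)]
      ring
    · rw [if_neg hv]

lemma cext_coneH (K : SCpx V) (v : V) {n : ℕ} (f : cochain K (n + 1)) (s : Finset V) :
    cext K n (coneH K v f) s =
      if v ∈ s then 0 else (-1 : ℚ) ^ cnt s v * cext K (n + 1) f (insert v s) := by
  by_cases h1 : s ∈ K.faces ∧ s.card = n
  · rw [cext_eq (coneH K v f) h1.1 h1.2]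
    rfl
  · rw [cext_not (coneH K v f) h1]
    by_cases hv : v ∈ s
    · rw [if_pos hv]
    · rw [if_neg hv, cext_not f (fun hc2 => h1
        ⟨K.down s _ (Finset.subset_insert v s) hc2.1, by
          have h2 := hc2.2
          have hci : (insert v s).card = s.card + 1 := Finset.card_insert_of_notMem hv
          omega⟩)]
      ring

lemma phiL_psiL (K : SCpx V) (v : V) {n : ℕ} (h : cochain (lkC K v) n) :
    phiL K v (psiL K v h) = h := by
  funext s
  show (-1 : ℚ) ^ cnt s.1 v * cext K (n + 1) (psiL K v h) (insert v s.1) = h s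
  rw [cext_psiL, if_pos (Finset.mem_insert_self v s.1), Finset.erase_insert s.2.1.1,
    cnt_insert_self, ← mul_assoc, sqq, one_mul, cext_val]

lemma psiL_phiL (K : SCpx V) (v : V) {n : ℕ} (f : cochain K (n + 1))
    (hvan : ∀ s : Finset V, v ∉ s → cext K (n + 1) f s = 0) :
    psiL K v (phiL K v f) = f := by
  funext t
  show (if v ∈ t.1 then (-1 : ℚ) ^ cnt t.1 v * cext (lkC K v) n (phiL K v f) (t.1.erase v)
      else 0) = f t
  by_cases hv : v ∈ t.1
  · rw [if_pos hv, cext_phiL K v f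
      (show t.1.erase v ∈ (lkC K v).faces from
        ⟨Finset.notMem_erase v t.1, by rw [Finset.insert_erase hv]; exact t.2.1⟩)
      (by rw [Finset.card_erase_of_mem hv, t.2.2, Nat.add_sub_cancel]),
      Finset.insert_erase hv, cnt_erase_self, ← mul_assoc, sqq, one_mul, cext_val]
  · rw [if_neg hv, ← cext_val f t, hvan t.1 hv]

/-- The key sign computation relating `delta` on `K` at a face containing `v`
with `delta` on the link of `v`. -/
lemma key_c (K : SCpx V) (v : V) (n : ℕ) (f : cochain K (n + 1))
    (hvan : ∀ s : Finset V, v ∉ s → cext K (n + 1) f s = 0)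
    {t : Finset V} (ht : t ∈ K.faces) (htc : t.card = n + 1 + 1) (hvt : v ∈ t) :
    cext K (n + 1 + 1) (delta K (n + 1) f) t =
      -((-1 : ℚ) ^ cnt t v *
        cext (lkC K v) (n + 1) (delta (lkC K v) n (phiL K v f)) (t.erase v)) := by
  have hlkf : t.erase v ∈ (lkC K v).faces :=
    ⟨Finset.notMem_erase v t, by rw [Finset.insert_erase hvt]; exact ht⟩
  have hlkc : (t.erase v).card = n + 1 := by
    rw [Finset.card_erase_of_mem hvt, htc, Nat.add_sub_cancel]
  rw [cext_delta K (n + 1) f ht htc,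
    cext_delta (lkC K v) n (phiL K v f) hlkf hlkc]
  rw [← Finset.add_sum_erase t _ hvt, hvan (t.erase v) (Finset.notMem_erase v t), mul_zero,
    zero_add]
  rw [Finset.mul_sum, ← Finset.sum_neg_distrib]
  refine Finset.sum_congr rfl fun w hw => ?_
  have hwt : w ∈ t := Finset.mem_of_mem_erase hw
  have hwv : w ≠ v := Finset.ne_of_mem_erase hw
  have hvtw : v ∈ t.erase w := Finset.mem_erase.2 ⟨hwv.symm, hvt⟩
  have harg : (t.erase v).erase w = (t.erase w).erase v := Finset.erase_right_comm
  have hlkf2 : (t.erase v).erase w ∈ (lkC K v).faces := by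
    rw [harg]
    exact ⟨Finset.notMem_erase v _, by
      rw [Finset.insert_erase hvtw]
      exact K.down _ _ (Finset.erase_subset _ _) ht⟩
  have hlkc2 : ((t.erase v).erase w).card = n := by
    rw [Finset.card_erase_of_mem hw, hlkc, Nat.add_sub_cancel]
  rw [cext_phiL K v f hlkf2 hlkc2]
  rw [show insert v ((t.erase v).erase w) = t.erase w by
    rw [harg, Finset.insert_erase hvtw]]
  rw [show cnt ((t.erase v).erase w) v = cnt (t.erase w) v by rw [harg, cnt_erase_self]]
  exact sign_helper2 (sign_swap hvt hwt (Ne.symm hwv)) (sqq (cnt (t.erase w) v))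

lemma psiL_delta (K : SCpx V) (v : V) {n : ℕ} (h : cochain (lkC K v) n) :
    delta K (n + 1) (psiL K v h) = -(psiL K v (delta (lkC K v) n h)) := by
  funext t
  obtain ⟨t, ht, htc⟩ := t
  have hvan : ∀ s : Finset V, v ∉ s → cext K (n + 1) (psiL K v h) s = 0 := by
    intro s hv
    rw [cext_psiL, if_neg hv]
  show delta K (n + 1) (psiL K v h) ⟨t, ht, htc⟩ =
    -(psiL K v (delta (lkC K v) n h) ⟨t, ht, htc⟩)
  by_cases hvt : v ∈ t
  · rw [← cext_val (delta K (n + 1) (psiL K v h)) ⟨t, ht, htc⟩,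
      key_c K v n (psiL K v h) hvan ht htc hvt, phiL_psiL]
    show _ = -(if v ∈ t then (-1 : ℚ) ^ cnt t v *
      cext (lkC K v) (n + 1) (delta (lkC K v) n h) (t.erase v) else 0)
    rw [if_pos hvt]
  · rw [delta_apply]
    have hz : ∀ w ∈ t, (-1 : ℚ) ^ cnt t w * cext K (n + 1) (psiL K v h) (t.erase w) = 0 := by
      intro w hw
      rw [hvan (t.erase w) (fun hc => hvt (Finset.mem_of_mem_erase hc)), mul_zero]
    rw [Finset.sum_congr rfl hz, Finset.sum_const_zero]
    show (0 : ℚ) = -(if v ∈ t then (-1 : ℚ) ^ cnt t v *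
      cext (lkC K v) (n + 1) (delta (lkC K v) n h) (t.erase v) else 0)
    rw [if_neg hvt, neg_zero]

/-! ### Vanishing of cohomology: abstract lemmas -/

/-- `HZ K d` says that every cocycle in degree `d` is a coboundary. -/
def HZ (K : SCpx V) (d : ℕ) : Prop :=
  ∀ f : cochain K d, delta K d f = 0 → f ∈ prevRange K d

lemma HZ_vertex (K : SCpx V) (h : (∅ : Finset V) ∈ K.faces → ∃ w : V, {w} ∈ K.faces) :
    HZ K 0 := by
  intro f hf
  show f ∈ (⊥ : Submodule ℚ (cochain K 0))
  rw [Submodule.mem_bot]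
  funext s
  have hs : s.1 = ∅ := Finset.card_eq_zero.mp s.2.2
  obtain ⟨w, hw⟩ := h (by rw [← hs]; exact s.2.1)
  have h0 : delta K 0 f ⟨{w}, hw, Finset.card_singleton w⟩ = 0 := by rw [hf]; rfl
  rw [delta_apply] at h0
  rw [Finset.sum_singleton, Finset.erase_singleton] at h0
  have hcnt : cnt ({w} : Finset V) w = 0 := by
    unfold cnt
    rw [Finset.filter_singleton, if_neg (lt_irrefl _), Finset.card_empty]
  rw [hcnt, pow_zero, one_mul] at h0
  have hse : s = ⟨(∅ : Finset V), by rw [← hs]; exact s.2.1, Finset.card_empty⟩ :=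
    Subtype.ext hs
  rw [hse, ← cext_val f, h0]
  rfl

lemma HZ_of_cone (K : SCpx V) (v : V) (hc : ∀ s ∈ K.faces, insert v s ∈ K.faces)
    (d : ℕ) : HZ K d := by
  match d with
  | 0 =>
    exact HZ_vertex K (fun h0 => ⟨v, by simpa using hc ∅ h0⟩)
  | (n + 1) =>
    intro f hf
    show f ∈ LinearMap.range (delta K n)
    refine ⟨coneH K v f, ?_⟩
    funext t
    obtain ⟨t, ht, htc⟩ := t
    rw [delta_apply, ← cext_val f ⟨t, ht, htc⟩]
    by_cases hvt : v ∈ t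
    · rw [Finset.sum_eq_single_of_mem v hvt (fun w hw hne => by
        rw [cext_coneH, if_pos (Finset.mem_erase.2 ⟨Ne.symm hne, hvt⟩), mul_zero])]
      rw [cext_coneH, if_neg (Finset.notMem_erase v t), Finset.insert_erase hvt,
        cnt_erase_self, ← mul_assoc, sqq, one_mul]
    · have hins : insert v t ∈ K.faces := hc t ht
      have hinsc : (insert v t).card = (n + 1) + 1 := by
        rw [Finset.card_insert_of_notMem hvt, htc]
      have h0 : cext K (n + 1 + 1) (delta K (n + 1) f) (insert v t) = 0 := by
        rw [hf, cext_zero]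
      rw [cext_delta K (n + 1) f hins hinsc, Finset.sum_insert hvt, Finset.erase_insert hvt,
        cnt_insert_self] at h0
      have hrw : ∀ w ∈ t, (-1 : ℚ) ^ cnt (insert v t) w *
          cext K (n + 1) f ((insert v t).erase w)
          = (-1 : ℚ) ^ cnt (insert v t) w * cext K (n + 1) f (insert v (t.erase w)) := by
        intro w hw
        rw [Finset.erase_insert_of_ne (fun he => hvt (by rw [he]; exact hw))]
      rw [Finset.sum_congr rfl hrw] at h0
      have hterm : ∀ w ∈ t, (-1 : ℚ) ^ cnt t w * cext K n (coneH K v f) (t.erase w)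
          = -((-1 : ℚ) ^ cnt t v * ((-1 : ℚ) ^ cnt (insert v t) w *
              cext K (n + 1) f (insert v (t.erase w)))) := by
        intro w hw
        rw [cext_coneH, if_neg (fun hc2 => hvt (Finset.mem_of_mem_erase hc2))]
        have hne : v ≠ w := fun he => hvt (by rw [he]; exact hw)
        have ss := sign_swap (Finset.mem_insert_self v t) (Finset.mem_insert_of_mem hw) hne
        rw [Finset.erase_insert hvt, cnt_insert_self] at ss
        rw [show cnt ((insert v t).erase w) v = cnt (t.erase w) v by
          rw [Finset.erase_insert_of_ne hne, cnt_insert_self]] at ss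
        exact sign_helper1 ss (sqq _) (sqq _)
      rw [Finset.sum_congr rfl hterm, Finset.sum_neg_distrib, ← Finset.mul_sum]
      have hs0 : ∑ w ∈ t, (-1 : ℚ) ^ cnt (insert v t) w *
          cext K (n + 1) f (insert v (t.erase w))
          = -((-1 : ℚ) ^ cnt t v * cext K (n + 1) f t) := by linarith [h0]
      rw [hs0]
      linear_combination (cext K (n + 1) f t) * sqq (cnt t v)

lemma prev_psiL (K : SCpx V) (v : V) (e : ℕ) (f' : cochain K (e + 1))
    (hvan : ∀ s : Finset V, v ∉ s → cext K (e + 1) f' s = 0)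
    (hmem : phiL K v f' ∈ prevRange (lkC K v) e) :
    ∃ p : cochain K e, delta K e p = -f' := by
  match e, f', hvan, hmem with
  | 0, f', hvan, hmem =>
    have hphi0 : phiL K v f' = 0 := by
      rw [show prevRange (lkC K v) 0 = ⊥ from rfl, Submodule.mem_bot] at hmem
      exact hmem
    have hf'0 : f' = 0 := by
      rw [← psiL_phiL K v f' hvan, hphi0]
      funext t
      show (if v ∈ t.1 then (-1 : ℚ) ^ cnt t.1 v *
        cext (lkC K v) 0 (0 : cochain (lkC K v) 0) (t.1.erase v) else 0) = 0
      rw [cext_zero]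
      split <;> ring
    exact ⟨0, by rw [map_zero, hf'0, neg_zero]⟩
  | (e' + 1), f', hvan, hmem =>
    obtain ⟨h, hh⟩ : ∃ h, delta (lkC K v) e' h = phiL K v f' := hmem
    refine ⟨psiL K v h, ?_⟩
    rw [psiL_delta, hh, psiL_phiL K v f' hvan]

/-- The main exactness step: if cohomology vanishes for the deletion in degree `e+1`
and for the link in degree `e`, it vanishes for `K` in degree `e + 1`. -/
lemma HZ_step (K : SCpx V) (v : V) (e : ℕ)
    (hdel : HZ (delC K v) (e + 1)) (hlk : HZ (lkC K v) e) : HZ K (e + 1) := by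
  intro f hf
  have h1 : delta (delC K v) (e + 1) (resD K v f) = 0 := by
    funext t
    rw [delta_apply]
    have h2 := delta_apply K (e + 1) f ⟨t.1, t.2.1.1, t.2.2⟩
    rw [hf] at h2
    have h3 : ∀ w ∈ t.1, (-1 : ℚ) ^ cnt t.1 w *
        cext (delC K v) (e + 1) (resD K v f) (t.1.erase w)
        = (-1 : ℚ) ^ cnt t.1 w * cext K (e + 1) f (t.1.erase w) := by
      intro w hw
      rw [cext_resD K v f (fun hc => t.2.1.2 (Finset.mem_of_mem_erase hc))]
    rw [Finset.sum_congr rfl h3, ← h2]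
    rfl
  obtain ⟨g, hg⟩ : ∃ g, delta (delC K v) e g = resD K v f := hdel (resD K v f) h1
  set f' : cochain K (e + 1) := f - delta K e (extD K v g) with hf'
  have hvan : ∀ s : Finset V, v ∉ s → cext K (e + 1) f' s = 0 := by
    intro s hv
    by_cases hs : s ∈ K.faces ∧ s.card = e + 1
    · rw [hf', cext_sub, cext_delta K e (extD K v g) hs.1 hs.2]
      have h4 : ∀ w ∈ s, (-1 : ℚ) ^ cnt s w * cext K e (extD K v g) (s.erase w)
          = (-1 : ℚ) ^ cnt s w * cext (delC K v) e g (s.erase w) := by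
        intro w hw
        rw [cext_extD]
      rw [Finset.sum_congr rfl h4]
      have hsD : s ∈ (delC K v).faces := ⟨hs.1, hv⟩
      have h5 : ∑ w ∈ s, (-1 : ℚ) ^ cnt s w * cext (delC K v) e g (s.erase w)
          = cext (delC K v) (e + 1) (delta (delC K v) e g) s :=
        (cext_delta (delC K v) e g hsD hs.2).symm
      rw [h5, hg]
      rw [cext_resD K v f hv]
      ring
    · rw [cext_not f' hs]
  have hdf' : delta K (e + 1) f' = 0 := by
    rw [hf', map_sub, hf, delta_delta, sub_zero]
  have hker : delta (lkC K v) e (phiL K v f') = 0 := by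
    funext s
    have hts : insert v s.1 ∈ K.faces := s.2.1.2
    have htc : (insert v s.1).card = e + 1 + 1 := by
      rw [Finset.card_insert_of_notMem s.2.1.1, s.2.2]
    have hk := key_c K v e f' hvan hts htc (Finset.mem_insert_self v s.1)
    rw [hdf', cext_zero, Finset.erase_insert s.2.1.1] at hk
    have h6 : cext (lkC K v) (e + 1) (delta (lkC K v) e (phiL K v f')) s.1 = 0 := by
      have hne : ((-1 : ℚ) ^ cnt (insert v s.1) v) ≠ 0 := pow_ne_zero _ (by norm_num)
      rcases mul_eq_zero.1 (neg_eq_zero.1 hk.symm) with h | h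
      · exact absurd h hne
      · exact h
    rw [← cext_val (delta (lkC K v) e (phiL K v f')) s, h6]
    rfl
  have hmem := hlk (phiL K v f') hker
  obtain ⟨p, hp⟩ := prev_psiL K v e f' hvan hmem
  show f ∈ LinearMap.range (delta K e)
  refine ⟨extD K v g - p, ?_⟩
  rw [map_sub, hp, sub_neg_eq_add, hf']
  abel

/-! ### Finrank bookkeeping -/

lemma prev_le_ker (K : SCpx V) (d : ℕ) : prevRange K d ≤ LinearMap.ker (delta K d) := by
  match d with
  | 0 => exact bot_le
  | (n + 1) =>
    rintro x ⟨y, rfl⟩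
    rw [LinearMap.mem_ker]
    exact delta_delta K n y

lemma finrank_Hq_zero_iff (K : SCpx V) (d : ℕ) :
    Module.finrank ℚ (Hq K d) = 0 ↔ HZ K d := by
  rw [Module.finrank_zero_iff, Submodule.Quotient.subsingleton_iff,
    Submodule.comap_subtype_eq_top]
  constructor
  · intro h f hf
    exact h (LinearMap.mem_ker.2 hf)
  · intro h x hx
    exact h x (LinearMap.mem_ker.1 hx)

set_option synthInstance.maxHeartbeats 1000000 in
set_option maxHeartbeats 1000000 in
lemma finrank_Hq_add (K : SCpx V) (d : ℕ) :
    Module.finrank ℚ (Hq K d) + Module.finrank ℚ ↥(prevRange K d)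
      = Module.finrank ℚ ↥(LinearMap.ker (delta K d)) := by
  have hle := prev_le_ker K d
  have e := Submodule.comapSubtypeEquivOfLe hle
  have h2 : Module.finrank ℚ
        ↥((prevRange K d).comap (LinearMap.ker (delta K d)).subtype)
      = Module.finrank ℚ ↥(prevRange K d) := LinearEquiv.finrank_eq e
  rw [← h2]
  exact Submodule.finrank_quotient_add_finrank _

lemma finrank_Hq_zero_of_no_face (K : SCpx V) (d : ℕ)
    (h : ∀ s ∈ K.faces, s.card ≠ d) : Module.finrank ℚ (Hq K d) = 0 := by
  rw [finrank_Hq_zero_iff]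
  intro f hf
  have : f = 0 := funext fun s => absurd s.2.2 (h s.1 s.2.1)
  rw [this]
  exact Submodule.zero_mem _

open Classical in
lemma finrank_cochain_eq (K : SCpx V) (d : ℕ) :
    Module.finrank ℚ (cochain K d)
      = ((Finset.univ : Finset (Finset V)).filter
          (fun s => s ∈ K.faces ∧ s.card = d)).card := by
  rw [Module.finrank_fintype_fun_eq_card, Fintype.card_subtype]

lemma telescope (r p : ℕ → ℤ) (h0 : p 0 = 0) (hs : ∀ d, p (d + 1) = r d) (N : ℕ) :
    ∑ d ∈ Finset.range (N + 1), (-1 : ℤ) ^ d * (p d + r d) = (-1) ^ N * r N := by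
  induction N with
  | zero => simp [h0]
  | succ N ih =>
    rw [Finset.sum_range_succ, ih, hs N, pow_succ]
    ring

lemma cochain_top_subsingleton (K : SCpx V) (d : ℕ) (hd : Fintype.card V < d) :
    Subsingleton (cochain K d) := by
  constructor
  intro f g
  funext s
  have h1 := s.2.2
  have h2 : s.1.card ≤ Fintype.card V := by
    rw [← Finset.card_univ]
    exact Finset.card_le_univ s.1
  omega

lemma euler (K : SCpx V) :
    ∑ d ∈ Finset.range (Fintype.card V + 1 + 1),
        (-1 : ℤ) ^ d * (Module.finrank ℚ (Hq K d) : ℤ)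
      = ∑ d ∈ Finset.range (Fintype.card V + 1 + 1),
        (-1 : ℤ) ^ d * (Module.finrank ℚ (cochain K d) : ℤ) := by
  set N := Fintype.card V + 1 with hN
  set r : ℕ → ℤ := fun d => (Module.finrank ℚ ↥(LinearMap.range (delta K d)) : ℤ) with hr
  set p : ℕ → ℤ := fun d => (Module.finrank ℚ ↥(prevRange K d) : ℤ) with hp
  have hkey : ∀ d, (Module.finrank ℚ (Hq K d) : ℤ)
      = (Module.finrank ℚ (cochain K d) : ℤ) - (p d + r d) := by
    intro d
    have h1 := finrank_Hq_add K d
    have h2 := LinearMap.finrank_range_add_finrank_ker (delta K d)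
    simp only [hp, hr]
    push_cast
    omega
  have h0 : p 0 = 0 := by
    show ((Module.finrank ℚ ↥(⊥ : Submodule ℚ (cochain K 0))) : ℤ) = 0
    rw [finrank_bot]
    simp
  have hsucc : ∀ d, p (d + 1) = r d := fun d => rfl
  have htel := telescope r p h0 hsucc N
  have hrN : r N = 0 := by
    show ((Module.finrank ℚ ↥(LinearMap.range (delta K N))) : ℤ) = 0
    have hsub := cochain_top_subsingleton K (N + 1) (by omega)
    have : Subsingleton ↥(LinearMap.range (delta K N)) := by
      constructor
      intro a b
      apply Subtype.ext
      exact Subsingleton.elim _ _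
    rw [Module.finrank_zero_of_subsingleton]
    simp
  calc ∑ d ∈ Finset.range (N + 1), (-1 : ℤ) ^ d * (Module.finrank ℚ (Hq K d) : ℤ)
      = ∑ d ∈ Finset.range (N + 1), ((-1 : ℤ) ^ d * (Module.finrank ℚ (cochain K d) : ℤ)
          - (-1 : ℤ) ^ d * (p d + r d)) := by
        refine Finset.sum_congr rfl fun d _ => ?_
        rw [hkey d]
        ring
    _ = ∑ d ∈ Finset.range (N + 1), (-1 : ℤ) ^ d * (Module.finrank ℚ (cochain K d) : ℤ)
          - ∑ d ∈ Finset.range (N + 1), (-1 : ℤ) ^ d * (p d + r d) := Finset.sum_sub_distrib _ _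
    _ = _ := by rw [htel, hrN, mul_zero, sub_zero]


/-! ### Independence complexes on a window of vertices -/

/-- Independence of a finite set of vertices. -/
def Indep (G : SimpleGraph V) (s : Finset V) : Prop := ∀ u ∈ s, ∀ w ∈ s, ¬ G.Adj u w

lemma indep_insert {G : SimpleGraph V} {s : Finset V} {v : V} (hs : Indep G s)
    (h : ∀ x ∈ s, ¬ G.Adj v x) : Indep G (insert v s) := by
  intro a ha b hb
  rcases Finset.mem_insert.1 ha with rfl | ha'
  · rcases Finset.mem_insert.1 hb with rfl | hb'
    · exact G.irrefl
    · exact h b hb'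
  · rcases Finset.mem_insert.1 hb with rfl | hb'
    · exact fun hadj => h a ha' hadj.symm
    · exact hs a ha' b hb'

/-- The independence complex of `G` restricted to the window `W`. -/
def IC (G : SimpleGraph V) (W : Finset V) : SCpx V where
  faces := {s | s ⊆ W ∧ Indep G s}
  down := fun s t hst ht => ⟨hst.trans ht.1, fun u hu w hw => ht.2 u (hst hu) w (hst hw)⟩

lemma IC_mem {G : SimpleGraph V} {W s : Finset V} :
    s ∈ (IC G W).faces ↔ s ⊆ W ∧ Indep G s := Iff.rfl

lemma SCpx_ext {K L : SCpx V} (h : K.faces = L.faces) : K = L := by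
  cases K
  cases L
  simp only at h
  subst h
  rfl

lemma delC_IC (G : SimpleGraph V) (W : Finset V) (v : V) :
    delC (IC G W) v = IC G (W.erase v) := by
  apply SCpx_ext
  ext s
  show (s ∈ (IC G W).faces ∧ v ∉ s) ↔ s ∈ (IC G (W.erase v)).faces
  rw [IC_mem, IC_mem, Finset.subset_erase]
  tauto

open Classical in
lemma lkC_IC (G : SimpleGraph V) {W : Finset V} {v : V} (hv : v ∈ W) :
    lkC (IC G W) v = IC G ((W.erase v).filter (fun x => ¬ G.Adj v x)) := by
  apply SCpx_ext
  ext s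
  show (v ∉ s ∧ insert v s ∈ (IC G W).faces) ↔ s ∈ (IC G _).faces
  rw [IC_mem, IC_mem]
  constructor
  · rintro ⟨hvs, hsub, hind⟩
    refine ⟨?_, fun a ha b hb => hind a (Finset.mem_insert_of_mem ha) b
      (Finset.mem_insert_of_mem hb)⟩
    intro x hx
    rw [Finset.mem_filter, Finset.mem_erase]
    exact ⟨⟨fun he => hvs (by rw [← he]; exact hx), hsub (Finset.mem_insert_of_mem hx)⟩,
      hind v (Finset.mem_insert_self v s) x (Finset.mem_insert_of_mem hx)⟩
  · rintro ⟨hsub, hind⟩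
    have hvs : v ∉ s := fun hv2 => by
      have h3 := hsub hv2
      rw [Finset.mem_filter, Finset.mem_erase] at h3
      exact h3.1.1 rfl
    refine ⟨hvs, Finset.insert_subset hv
      (fun x hx => (Finset.mem_erase.1 (Finset.mem_filter.1 (hsub hx)).1).2),
      indep_insert hind (fun x hx => (Finset.mem_filter.1 (hsub hx)).2)⟩

lemma cone_IC (G : SimpleGraph V) {W : Finset V} {v : V} (hv : v ∈ W)
    (hiso : ∀ x ∈ W, ¬ G.Adj v x) :
    ∀ s ∈ (IC G W).faces, insert v s ∈ (IC G W).faces := fun s hs =>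
  ⟨Finset.insert_subset hv hs.1, indep_insert hs.2 (fun x hx => hiso x (hs.1 hx))⟩

/-- Vanishing of `Hq (IC G W) d` in high degrees `2 d ≥ |W| + 1`. -/
lemma vanish_big (G : SimpleGraph V) : ∀ n (W : Finset V), W.card = n →
    ∀ d, n + 1 ≤ 2 * d → Module.finrank ℚ (Hq (IC G W) d) = 0 := by
  intro n
  induction n using Nat.strong_induction_on with
  | _ n ih =>
  intro W hW d hd
  classical
  rcases Finset.eq_empty_or_nonempty W with rfl | ⟨v, hv⟩
  · apply finrank_Hq_zero_of_no_face
    intro s hs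
    have h1 : s = ∅ := Finset.subset_empty.1 hs.1
    subst h1
    simp only [Finset.card_empty] at hW ⊢
    omega
  · by_cases hiso : ∀ x ∈ W, ¬ G.Adj v x
    · rw [finrank_Hq_zero_iff]
      exact HZ_of_cone _ v (cone_IC G hv hiso) d
    · push_neg at hiso
      obtain ⟨u, huW, huAdj⟩ := hiso
      have hn1 : 1 ≤ n := by
        rw [← hW]
        exact Finset.card_pos.2 ⟨v, hv⟩
      obtain ⟨e, rfl⟩ : ∃ e, d = e + 1 := ⟨d - 1, by omega⟩
      rw [finrank_Hq_zero_iff]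
      apply HZ_step _ v e
      · rw [delC_IC, ← finrank_Hq_zero_iff]
        have hcard : (W.erase v).card = n - 1 := by
          rw [Finset.card_erase_of_mem hv, hW]
        exact ih (n - 1) (by omega) (W.erase v) hcard (e + 1) (by omega)
      · rw [lkC_IC G hv, ← finrank_Hq_zero_iff]
        set Wl := (W.erase v).filter (fun x => ¬ G.Adj v x) with hWl
        have hu' : u ∈ W.erase v := Finset.mem_erase.2 ⟨huAdj.ne', huW⟩
        have hsubWl : Wl ⊆ (W.erase v).erase u := by
          intro x hx
          rw [hWl, Finset.mem_filter] at hx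
          rw [Finset.mem_erase]
          exact ⟨fun he => hx.2 (by rw [he]; exact huAdj), hx.1⟩
        have hc1 : (W.erase v).card + 1 = n := by
          rw [Finset.card_erase_add_one hv, hW]
        have hc2 : ((W.erase v).erase u).card + 1 = (W.erase v).card :=
          Finset.card_erase_add_one hu'
        have hc3 : Wl.card ≤ ((W.erase v).erase u).card := Finset.card_le_card hsubWl
        exact ih Wl.card (by omega) Wl rfl e (by omega)

/-! ### Perfect matchings -/

/-- `G` restricted to `W` is a perfect matching on `W`. -/
def PM (G : SimpleGraph V) (W : Finset V) : Prop := ∀ v ∈ W, ∃! u, u ∈ W ∧ G.Adj v u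

lemma PM_erase (G : SimpleGraph V) {W : Finset V} {v : V} (hPM : PM G W) (hv : v ∈ W) :
    ∃ u, u ∈ W ∧ G.Adj v u ∧ u ≠ v ∧ (∀ z, z ∈ W ∧ G.Adj v z → z = u)
      ∧ (∀ z, z ∈ W ∧ G.Adj u z → z = v) ∧ PM G ((W.erase v).erase u) := by
  obtain ⟨u, ⟨huW, hadj⟩, huniq⟩ := hPM v hv
  have hvu : u ≠ v := hadj.ne'
  obtain ⟨y, ⟨hyW, hyadj⟩, hyuniq⟩ := hPM u huW
  have huVuniq : ∀ z, z ∈ W ∧ G.Adj u z → z = v := fun z hz =>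
    (hyuniq z hz).trans (hyuniq v ⟨hv, hadj.symm⟩).symm
  refine ⟨u, huW, hadj, hvu, huniq, huVuniq, ?_⟩
  intro w hw
  have hwW : w ∈ W := Finset.mem_of_mem_erase (Finset.mem_of_mem_erase hw)
  have hwv : w ≠ v := Finset.ne_of_mem_erase (Finset.mem_of_mem_erase hw)
  have hwu : w ≠ u := Finset.ne_of_mem_erase hw
  obtain ⟨x, ⟨hxW, hxadj⟩, hxuniq⟩ := hPM w hwW
  have hxv : x ≠ v := fun he =>
    hwu (huniq w ⟨hwW, G.adj_symm (by rw [← he]; exact hxadj)⟩)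
  have hxu : x ≠ u := fun he =>
    hwv (huVuniq w ⟨hwW, G.adj_symm (by rw [← he]; exact hxadj)⟩)
  refine ⟨x, ⟨Finset.mem_erase.2 ⟨hxu, Finset.mem_erase.2 ⟨hxv, hxW⟩⟩, hxadj⟩, ?_⟩
  intro z hz
  exact hxuniq z ⟨Finset.mem_of_mem_erase (Finset.mem_of_mem_erase hz.1), hz.2⟩

open Classical in
lemma S_matching (G : SimpleGraph V) : ∀ k (W : Finset V), W.card = 2 * k → PM G W →
    ∑ s ∈ Finset.univ.filter (fun s : Finset V => s ∈ (IC G W).faces), (-1 : ℤ) ^ s.card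
      = (-1) ^ k := by
  intro k
  induction k with
  | zero =>
    intro W hW hPM
    have hWe : W = ∅ := Finset.card_eq_zero.1 (by omega)
    subst hWe
    have hA : Finset.univ.filter (fun s : Finset V => s ∈ (IC G ∅).faces) = {∅} := by
      ext s
      simp only [Finset.mem_filter, Finset.mem_univ, true_and, Finset.mem_singleton, IC_mem]
      constructor
      · intro hs
        exact Finset.subset_empty.1 hs.1
      · rintro rfl
        exact ⟨Finset.Subset.refl _, fun a ha => absurd ha (Finset.notMem_empty a)⟩
    rw [hA, Finset.sum_singleton]
    simp
  | succ k ih =>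
    intro W hW hPM
    obtain ⟨v, hv⟩ := Finset.card_pos.1 (show 0 < W.card by omega)
    obtain ⟨u, huW, hadj, hvu, huniqv, huniqu, hPM'⟩ := PM_erase G hPM hv
    have hu' : u ∈ W.erase v := Finset.mem_erase.2 ⟨hvu, huW⟩
    have hcW' : ((W.erase v).erase u).card = 2 * k := by
      have h1 := Finset.card_erase_add_one hu'
      have h2 := Finset.card_erase_add_one hv
      omega
    have ihS := ih ((W.erase v).erase u) hcW' hPM'
    set A := Finset.univ.filter (fun s : Finset V => s ∈ (IC G W).faces) with hA
    set A' := Finset.univ.filter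
      (fun s : Finset V => s ∈ (IC G ((W.erase v).erase u)).faces) with hA'
    have hfaces : ∀ s : Finset V, s ∈ (IC G ((W.erase v).erase u)).faces
        ↔ s ∈ (IC G W).faces ∧ v ∉ s ∧ u ∉ s := by
      intro s
      rw [IC_mem, IC_mem, Finset.subset_erase, Finset.subset_erase]
      tauto
    have hS1 : ∑ s ∈ A.filter (fun s => v ∈ s), (-1 : ℤ) ^ s.card
        = -∑ s ∈ A', (-1 : ℤ) ^ s.card := by
      rw [← Finset.sum_neg_distrib]
      refine Finset.sum_nbij' (fun s => s.erase v) (fun s => insert v s) ?_ ?_ ?_ ?_ ?_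
      · intro s hs
        rw [Finset.mem_filter] at hs
        obtain ⟨hsA, hvs⟩ := hs
        rw [hA, Finset.mem_filter] at hsA
        have hsF := hsA.2
        rw [hA', Finset.mem_filter]
        refine ⟨Finset.mem_univ _, (hfaces _).2 ⟨?_, Finset.notMem_erase v s, ?_⟩⟩
        · exact (IC G W).down _ _ (Finset.erase_subset _ _) hsF
        · intro hus
          exact hsF.2 v hvs u (Finset.mem_of_mem_erase hus) hadj
      · intro t ht
        rw [hA', Finset.mem_filter] at ht
        have htF := (hfaces _).1 ht.2
        rw [Finset.mem_filter, hA, Finset.mem_filter]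
        refine ⟨⟨Finset.mem_univ _, ?_, ?_⟩, Finset.mem_insert_self v t⟩
        · exact Finset.insert_subset hv htF.1.1
        · refine indep_insert htF.1.2 (fun x hx hadjx => ?_)
          have := huniqv x ⟨htF.1.1 hx, hadjx⟩
          subst this
          exact htF.2.2 hx
      · intro s hs
        rw [Finset.mem_filter] at hs
        exact Finset.insert_erase hs.2
      · intro t ht
        rw [hA', Finset.mem_filter] at ht
        exact Finset.erase_insert ((hfaces _).1 ht.2).2.1
      · intro s hs
        rw [Finset.mem_filter] at hs
        have h1 := Finset.card_erase_add_one hs.2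
        rw [← h1, pow_succ]
        ring
    have hS2 : ∑ s ∈ (A.filter (fun s => v ∉ s)).filter (fun s => u ∈ s), (-1 : ℤ) ^ s.card
        = -∑ s ∈ A', (-1 : ℤ) ^ s.card := by
      rw [← Finset.sum_neg_distrib]
      refine Finset.sum_nbij' (fun s => s.erase u) (fun s => insert u s) ?_ ?_ ?_ ?_ ?_
      · intro s hs
        rw [Finset.mem_filter] at hs
        obtain ⟨hs1, hus⟩ := hs
        rw [Finset.mem_filter] at hs1
        obtain ⟨hsA, hvs⟩ := hs1
        rw [hA, Finset.mem_filter] at hsA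
        have hsF := hsA.2
        rw [hA', Finset.mem_filter]
        refine ⟨Finset.mem_univ _, (hfaces _).2 ⟨?_, ?_, Finset.notMem_erase u s⟩⟩
        · exact (IC G W).down _ _ (Finset.erase_subset _ _) hsF
        · intro hvs2
          exact hvs (Finset.mem_of_mem_erase hvs2)
      · intro t ht
        rw [hA', Finset.mem_filter] at ht
        have htF := (hfaces _).1 ht.2
        rw [Finset.mem_filter, Finset.mem_filter, hA, Finset.mem_filter]
        refine ⟨⟨⟨Finset.mem_univ _, ?_, ?_⟩, ?_⟩, Finset.mem_insert_self u t⟩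
        · exact Finset.insert_subset huW htF.1.1
        · refine indep_insert htF.1.2 (fun x hx hadjx => ?_)
          have := huniqu x ⟨htF.1.1 hx, hadjx⟩
          subst this
          exact htF.2.1 hx
        · rw [Finset.mem_insert]
          push_neg
          exact ⟨fun he => hvu he.symm, htF.2.1⟩
      · intro s hs
        rw [Finset.mem_filter] at hs
        exact Finset.insert_erase hs.2
      · intro t ht
        rw [hA', Finset.mem_filter] at ht
        exact Finset.erase_insert ((hfaces _).1 ht.2).2.2
      · intro s hs
        rw [Finset.mem_filter] at hs
        have h1 := Finset.card_erase_add_one hs.2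
        rw [← h1, pow_succ]
        ring
    have hS3 : (A.filter (fun s => v ∉ s)).filter (fun s => u ∉ s) = A' := by
      ext s
      rw [Finset.mem_filter, Finset.mem_filter, hA, Finset.mem_filter, hA', Finset.mem_filter]
      rw [hfaces s]
      have := Finset.mem_univ s
      tauto
    calc ∑ s ∈ A, (-1 : ℤ) ^ s.card
        = ∑ s ∈ A.filter (fun s => v ∈ s), (-1 : ℤ) ^ s.card
          + ∑ s ∈ A.filter (fun s => v ∉ s), (-1 : ℤ) ^ s.card :=
          (Finset.sum_filter_add_sum_filter_not A _ _).symm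
      _ = ∑ s ∈ A.filter (fun s => v ∈ s), (-1 : ℤ) ^ s.card
          + (∑ s ∈ (A.filter (fun s => v ∉ s)).filter (fun s => u ∈ s), (-1 : ℤ) ^ s.card
            + ∑ s ∈ (A.filter (fun s => v ∉ s)).filter (fun s => u ∉ s), (-1 : ℤ) ^ s.card) := by
          rw [Finset.sum_filter_add_sum_filter_not (A.filter (fun s => v ∉ s)) _ _]
      _ = (-1) ^ (k + 1) := by
          rw [hS1, hS2, hS3, ihS, pow_succ]
          ring

/-- Full computation of the cohomology of the independence complex of a
perfect matching: one dimension in the middle degree, zero elsewhere. -/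
lemma matching_Hq (G : SimpleGraph V) : ∀ k (W : Finset V), W.card = 2 * k → PM G W →
    (∀ d, d ≠ k → Module.finrank ℚ (Hq (IC G W) d) = 0)
      ∧ Module.finrank ℚ (Hq (IC G W) k) = 1 := by
  intro k
  induction k with
  | zero =>
    intro W hW hPM
    have hWe : W = ∅ := Finset.card_eq_zero.1 (by omega)
    subst hWe
    constructor
    · intro d hd
      apply finrank_Hq_zero_of_no_face
      intro s hs
      have h1 : s = ∅ := Finset.subset_empty.1 hs.1
      subst h1
      simp only [Finset.card_empty]
      omega
    · have hker : LinearMap.ker (delta (IC G ∅) 0) = ⊤ := by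
        rw [eq_top_iff]
        intro f _
        rw [LinearMap.mem_ker]
        funext t
        have h1 : t.1 = ∅ := Finset.subset_empty.1 t.2.1.1
        have h2 := t.2.2
        rw [h1, Finset.card_empty] at h2
        omega
      have h1 := finrank_Hq_add (IC G ∅) 0
      have h2 : Module.finrank ℚ ↥(prevRange (IC G ∅) 0) = 0 := by
        show Module.finrank ℚ ↥(⊥ : Submodule ℚ (cochain (IC G ∅) 0)) = 0
        exact finrank_bot ℚ _
      have h3 : Module.finrank ℚ (cochain (IC G ∅) 0) = 1 := by
        classical
        rw [finrank_cochain_eq]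
        have hset : (Finset.univ.filter
            (fun s : Finset V => s ∈ (IC G ∅).faces ∧ s.card = 0)) = {∅} := by
          ext s
          simp only [Finset.mem_filter, Finset.mem_univ, true_and, Finset.mem_singleton,
            IC_mem, Finset.card_eq_zero]
          constructor
          · intro hs
            exact hs.2
          · rintro rfl
            exact ⟨⟨Finset.Subset.refl _,
              fun a ha => absurd ha (Finset.notMem_empty a)⟩, rfl⟩
        rw [hset, Finset.card_singleton]
      have h4 : Module.finrank ℚ ↥(LinearMap.ker (delta (IC G ∅) 0))
          = Module.finrank ℚ (cochain (IC G ∅) 0) := by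
        rw [hker]
        exact finrank_top ℚ _
      omega
  | succ k ih =>
    intro W hW hPM
    classical
    obtain ⟨v, hv⟩ := Finset.card_pos.1 (show 0 < W.card by omega)
    obtain ⟨u, huW, hadj, hvu, huniqv, huniqu, hPM'⟩ := PM_erase G hPM hv
    have hu' : u ∈ W.erase v := Finset.mem_erase.2 ⟨hvu, huW⟩
    have hcW' : ((W.erase v).erase u).card = 2 * k := by
      have h1 := Finset.card_erase_add_one hu'
      have h2 := Finset.card_erase_add_one hv
      omega
    have ihW := ih ((W.erase v).erase u) hcW' hPM'
    have hWl : (W.erase v).filter (fun x => ¬ G.Adj v x) = (W.erase v).erase u := by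
      ext x
      simp only [Finset.mem_filter, Finset.mem_erase]
      constructor
      · rintro ⟨⟨hxv, hxW⟩, hnadj⟩
        exact ⟨fun he => hnadj (by rw [he]; exact hadj), hxv, hxW⟩
      · rintro ⟨hxu, hxv, hxW⟩
        exact ⟨⟨hxv, hxW⟩, fun hadjx => hxu (huniqv x ⟨hxW, hadjx⟩)⟩
    have hconeDel : ∀ d, HZ (IC G (W.erase v)) d := by
      intro d
      apply HZ_of_cone _ u
      apply cone_IC G hu'
      intro x hx hadjx
      exact (Finset.ne_of_mem_erase hx) (huniqu x ⟨Finset.mem_of_mem_erase hx, hadjx⟩)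
    have hzero : ∀ d, d ≠ k + 1 → Module.finrank ℚ (Hq (IC G W) d) = 0 := by
      intro d hd
      match d, hd with
      | 0, hd =>
        rw [finrank_Hq_zero_iff]
        apply HZ_vertex
        intro _
        refine ⟨v, IC_mem.2 ⟨Finset.singleton_subset_iff.2 hv, fun a ha b hb => ?_⟩⟩
        rw [Finset.mem_singleton] at ha hb
        subst ha
        subst hb
        exact G.irrefl
      | (e + 1), hd =>
        rw [finrank_Hq_zero_iff]
        apply HZ_step _ v e
        · rw [delC_IC]
          exact hconeDel (e + 1)
        · rw [lkC_IC G hv, hWl, ← finrank_Hq_zero_iff]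
          exact ihW.1 e (by omega)
    refine ⟨hzero, ?_⟩
    have he := euler (IC G W)
    have hcle : W.card ≤ Fintype.card V := by
      rw [← Finset.card_univ]
      exact Finset.card_le_univ W
    have hkmem : k + 1 ∈ Finset.range (Fintype.card V + 1 + 1) := by
      rw [Finset.mem_range]
      omega
    rw [Finset.sum_eq_single_of_mem (k + 1) hkmem
      (fun b _ hb => by rw [hzero b hb]; ring)] at he
    have hR : ∑ d ∈ Finset.range (Fintype.card V + 1 + 1),
        (-1 : ℤ) ^ d * (Module.finrank ℚ (cochain (IC G W) d) : ℤ) = (-1) ^ (k + 1) := by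
      rw [Finset.sum_congr rfl (fun d _ => by rw [finrank_cochain_eq])]
      have hmaps : ∀ s ∈ Finset.univ.filter (fun s : Finset V => s ∈ (IC G W).faces),
          s.card ∈ Finset.range (Fintype.card V + 1 + 1) := by
        intro s _
        rw [Finset.mem_range]
        have : s.card ≤ Fintype.card V := by
          rw [← Finset.card_univ]
          exact Finset.card_le_univ s
        omega
      have hfib := Finset.sum_fiberwise_of_maps_to hmaps (fun s => (-1 : ℤ) ^ s.card)
      rw [← S_matching G (k + 1) W hW hPM, ← hfib]
      refine Finset.sum_congr rfl fun d _ => ?_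
      have hflt : (Finset.univ.filter (fun s : Finset V => s ∈ (IC G W).faces)).filter
          (fun s => s.card = d)
          = Finset.univ.filter (fun s : Finset V => s ∈ (IC G W).faces ∧ s.card = d) := by
        ext s
        simp only [Finset.mem_filter, Finset.mem_univ, true_and]
      rw [← hflt, Finset.sum_congr rfl (fun s hs => by
        rw [(Finset.mem_filter.1 hs).2]), Finset.sum_const, nsmul_eq_mul]
      ring
    rw [hR] at he
    have hne : ((-1 : ℤ)) ^ (k + 1) ≠ 0 := pow_ne_zero _ (by norm_num)
    have hcast := mul_left_cancel₀ hne
      (he.trans (by ring : ((-1 : ℤ)) ^ (k + 1) = (-1) ^ (k + 1) * 1))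
    exact_mod_cast hcast

end Aux

/-- Let `G` have `m = 2k` vertices. Then `H̃^{m/2-1}(I(G); ℚ)`,
if nonzero, is one-dimensional (and then `I(G)` has the reduced cohomology of a
sphere `S^{m/2-1}`, the boundary of a cross-polytope); moreover it is nonzero
exactly when `G` is a disjoint union of `m/2` edges (a perfect matching). -/
theorem stmt3 (G : SimpleGraph V) (k : ℕ) (hm : Fintype.card V = 2 * k) :
    (reducedBetti (indepCpx G) ((k : ℤ) - 1) ≠ 0 →
      reducedBetti (indepCpx G) ((k : ℤ) - 1) = 1 ∧
      ∀ r : ℤ, r ≠ (k : ℤ) - 1 → reducedBetti (indepCpx G) r = 0) ∧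
    (reducedBetti (indepCpx G) ((k : ℤ) - 1) ≠ 0 ↔ ∀ v : V, ∃! u, G.Adj v u) := by
  classical
  have hIC : indepCpx G = IC G Finset.univ := by
    apply SCpx_ext
    ext s
    show (∀ u ∈ s, ∀ v ∈ s, ¬ G.Adj u v) ↔ (s ⊆ Finset.univ ∧ Indep G s)
    exact ⟨fun h => ⟨Finset.subset_univ s, h⟩, fun h => h.2⟩
  have hcard : (Finset.univ : Finset V).card = 2 * k := by
    rw [Finset.card_univ]
    exact hm
  have htoNat : (((k : ℤ) - 1) + 1).toNat = k := by omega
  have hbetti : reducedBetti (indepCpx G) ((k : ℤ) - 1)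
      = Module.finrank ℚ (Hq (IC G Finset.univ) k) := by
    rw [hIC]
    unfold reducedBetti
    rw [if_neg (by omega : ¬((k : ℤ) - 1 < -1))]
    exact congrArg (fun n => Module.finrank ℚ (Hq (IC G Finset.univ) n)) htoNat
  have hPMiff : (∀ v : V, ∃! u, G.Adj v u) ↔ PM G Finset.univ := by
    constructor
    · intro h v _
      obtain ⟨u, hu, hq⟩ := h v
      exact ⟨u, ⟨Finset.mem_univ _, hu⟩, fun y hy => hq y hy.2⟩
    · intro h v
      obtain ⟨u, hu, hq⟩ := h v (Finset.mem_univ v)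
      exact ⟨u, hu.2, fun y hy => hq y ⟨Finset.mem_univ _, hy⟩⟩
  have main2 : Module.finrank ℚ (Hq (IC G Finset.univ) k) ≠ 0
      ↔ (∀ v : V, ∃! u, G.Adj v u) := by
    constructor
    · intro hne
      by_contra hnot
      push_neg at hnot
      obtain ⟨v, hbad⟩ := hnot
      apply hne
      by_cases hiso : ∀ x, ¬ G.Adj v x
      · rw [finrank_Hq_zero_iff]
        exact HZ_of_cone _ v (cone_IC G (Finset.mem_univ v) (fun x _ => hiso x)) k
      · push_neg at hiso
        obtain ⟨u, hu⟩ := hiso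
        have hex : ∃ u', G.Adj v u' ∧ u' ≠ u := by
          by_contra hno
          push_neg at hno
          exact hbad ⟨u, hu, hno⟩
        obtain ⟨u', hu', hne'⟩ := hex
        match k, hm with
        | 0, hm =>
          have : 0 < Fintype.card V := Fintype.card_pos_iff.2 ⟨v⟩
          omega
        | (e + 1), hm =>
          rw [finrank_Hq_zero_iff]
          apply HZ_step _ v e
          · rw [delC_IC, ← finrank_Hq_zero_iff]
            refine vanish_big G _ (Finset.univ.erase v) rfl (e + 1) ?_
            have h1 := Finset.card_erase_add_one (Finset.mem_univ v)
            rw [Finset.card_univ] at h1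
            omega
          · rw [lkC_IC G (Finset.mem_univ v), ← finrank_Hq_zero_iff]
            set Wl := (Finset.univ.erase v).filter (fun x => ¬ G.Adj v x) with hWldef
            refine vanish_big G _ Wl rfl e ?_
            have hvu : u ≠ v := hu.ne'
            have hvu' : u' ≠ v := hu'.ne'
            have hu1 : u ∈ Finset.univ.erase v :=
              Finset.mem_erase.2 ⟨hvu, Finset.mem_univ u⟩
            have hu2 : u' ∈ (Finset.univ.erase v).erase u :=
              Finset.mem_erase.2 ⟨hne', Finset.mem_erase.2 ⟨hvu', Finset.mem_univ u'⟩⟩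
            have hsub : Wl ⊆ ((Finset.univ.erase v).erase u).erase u' := by
              intro x hx
              rw [hWldef, Finset.mem_filter] at hx
              rw [Finset.mem_erase, Finset.mem_erase]
              exact ⟨fun he => hx.2 (by rw [he]; exact hu'),
                fun he => hx.2 (by rw [he]; exact hu), hx.1⟩
            have hc0 := Finset.card_erase_add_one (Finset.mem_univ v)
            have hc1 := Finset.card_erase_add_one hu1
            have hc2 := Finset.card_erase_add_one hu2
            have hc3 := Finset.card_le_card hsub
            have hc4 : (Finset.univ : Finset V).card = 2 * (e + 1) := by
              rw [Finset.card_univ]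
              exact hm
            omega
    · intro hall
      rw [(matching_Hq G k Finset.univ hcard (hPMiff.1 hall)).2]
      norm_num
  constructor
  · intro hne
    rw [hbetti] at hne
    have hall := main2.1 hne
    have hm2 := matching_Hq G k Finset.univ hcard (hPMiff.1 hall)
    refine ⟨by rw [hbetti, hm2.2], ?_⟩
    intro r hr
    by_cases hr' : r < -1
    · unfold reducedBetti
      rw [if_pos hr']
    · unfold reducedBetti
      rw [if_neg hr', hIC]
      apply hm2.1
      omega
  · rw [hbetti]
    exact main2
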